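/- Fix K ≥ 1, W > 0, weights w_1, …, w_K > 0 with w_0 = 0, normalized noise powers η_0 ≥ η_1 ≥ … ≥ η_K > 0, and P_max > 0. With f_l(x) = W·(w_l·log₂(x + η_l) − w_{l−1}·log₂(x + η_{l−1})), suppose (x*_1, …, x*_K) maximizes Σ_{l=1}^{K} f_l(x_l) over the chain set {P_max ≥ x_1 ≥ … ≥ x_K ≥ 0}. Then for every budget 0 ≤ P̄ ≤ P_max, the truncated vector (min{x*_1, P̄}, …, min{x*_K, P̄}) maximizes Σ_{l=1}^{K} f_l(x_l) over the chain set {P̄ ≥ x_1 ≥ … ≥ x_K ≥ 0}. -/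

import Mathlib

/-- `f_{q,q'}(y) = W·(w_{q'}·log₂(y + η_{q'}) − w_{q−1}·log₂(y + η_{q−1}))`. -/
noncomputable def fqq (W : ℝ) (w η : ℕ → ℝ) (q q' : ℕ) (y : ℝ) : ℝ :=
  W * (w q' * Real.logb 2 (y + η q') - w (q - 1) * Real.logb 2 (y + η (q - 1)))

/-- The chain set `C(P) = {x : P ≥ x 1 ≥ … ≥ x K ≥ 0}` (only coordinates `1, …, K` matter). -/
def chainSet (K : ℕ) (P : ℝ) : Set (ℕ → ℝ) :=
  {x | x 1 ≤ P ∧ (∀ l, 1 ≤ l → l < K → x (l + 1) ≤ x l) ∧ 0 ≤ x K}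

/-- The single-carrier objective `∑_{l=1}^{K} f_l(x_l)` with `f_l = f_{l,l}`. -/
noncomputable def objSC (K : ℕ) (W : ℝ) (w η : ℕ → ℝ) (x : ℕ → ℝ) : ℝ :=
  ∑ l ∈ Finset.Icc 1 K, fqq W w η l l (x l)


open Real Finset Set

/-- natural-log version of the objective -/
noncomputable def Sval (K : ℕ) (w η : ℕ → ℝ) (y : ℕ → ℝ) : ℝ :=
  ∑ l ∈ Finset.Icc 1 K, (w l * Real.log (y l + η l) - w (l - 1) * Real.log (y l + η (l - 1)))


/-- derivative of shifted log -/
lemma hasDerivAt_logshift (c u : ℝ) (h : 0 < u + c) :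
    HasDerivAt (fun v : ℝ => Real.log (v + c)) (1 / (u + c)) u := by
  have h1 : HasDerivAt (fun v : ℝ => v + c) 1 u := (hasDerivAt_id u).add_const c
  have h2 := (Real.hasDerivAt_log (ne_of_gt h)).comp u h1
  rw [mul_one] at h2
  rw [one_div]; exact h2

lemma hasDerivAt_F (A B c d u : ℝ) (hc : 0 < u + c) (hd : 0 < u + d) :
    HasDerivAt (fun v : ℝ => A * Real.log (v + c) - B * Real.log (v + d))
      (A / (u + c) - B / (u + d)) u := by
  have h1 := (hasDerivAt_logshift c u hc).const_mul A
  have h2 := (hasDerivAt_logshift d u hd).const_mul B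
  have h := h1.sub h2
  simp only [mul_one_div] at h
  exact h

/-- affine nonneg between endpoints -/
lemma affine_between (A B c d p q v : ℝ) (hpv : p ≤ v) (hvq : v ≤ q)
    (hNp : 0 ≤ A * (p + d) - B * (p + c)) (hNq : 0 ≤ A * (q + d) - B * (q + c)) :
    0 ≤ A * (v + d) - B * (v + c) := by
  rcases eq_or_lt_of_le (le_trans hpv hvq) with h | h
  · have : v = p := le_antisymm (h ▸ hvq) hpv
    simpa [this] using hNp
  · nlinarith [mul_nonneg (sub_nonneg.2 hvq) hNp, mul_nonneg (sub_nonneg.2 hpv) hNq]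

lemma affine_between_neg (A B c d p q v : ℝ) (hpv : p < v) (hvq : v < q)
    (hNp : A * (p + d) - B * (p + c) < 0) (hNq : A * (q + d) - B * (q + c) < 0) :
    A * (v + d) - B * (v + c) < 0 := by
  nlinarith [mul_neg_of_pos_of_neg (sub_pos.2 hvq) hNp, mul_neg_of_pos_of_neg (sub_pos.2 hpv) hNq]

/-- g-comparison: the marginal `A/(u+c) - B/(u+d)` is dominated by its value at a
smaller point `s` where it is nonnegative. -/
lemma g_compare (A B c d s u : ℝ) (hB : 0 ≤ B) (hc : 0 < c) (hcd : c ≤ d)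
    (hs : 0 ≤ s) (hsu : s ≤ u) (hN : 0 ≤ A * (s + d) - B * (s + c)) :
    A / (u + c) - B / (u + d) ≤ A / (s + c) - B / (s + d) := by
  have hd : 0 < d := lt_of_lt_of_le hc hcd
  have hsc : 0 < s + c := by linarith
  have hsd : 0 < s + d := by linarith
  have huc : 0 < u + c := by linarith
  have hud : 0 < u + d := by linarith
  have hx : 0 ≤ A * (s + d) * (u + d) - B * (s + c) * (u + c) := by
    nlinarith [mul_nonneg hN hud.le, mul_nonneg (mul_nonneg hB hsc.le) (sub_nonneg.2 hcd)]
  have key : 0 ≤ (A * (s + d) - B * (s + c)) * ((u + c) * (u + d))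
      - (A * (u + d) - B * (u + c)) * ((s + c) * (s + d)) := by
    nlinarith [mul_nonneg (sub_nonneg.2 hsu) hx]
  rw [div_sub_div _ _ (ne_of_gt huc) (ne_of_gt hud), div_sub_div _ _ (ne_of_gt hsc) (ne_of_gt hsd),
    div_le_div_iff₀ (mul_pos huc hud) (mul_pos hsc hsd)]
  nlinarith [key]

/-- monotone two-point comparison for `F(v) = A log(v+c) - B log(v+d)` -/
lemma Fab_mono (A B c d : ℝ) (hc : 0 < c) (hcd : c ≤ d) (p q : ℝ)
    (hp : 0 ≤ p) (hpq : p ≤ q)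
    (hNp : 0 ≤ A * (p + d) - B * (p + c)) (hNq : 0 ≤ A * (q + d) - B * (q + c)) :
    A * Real.log (p + c) - B * Real.log (p + d) ≤ A * Real.log (q + c) - B * Real.log (q + d) := by
  have hd : 0 < d := lt_of_lt_of_le hc hcd
  have hpos : ∀ v : ℝ, v ∈ Icc p q → 0 < v + c ∧ 0 < v + d := by
    intro v hv; constructor <;> [linarith [hv.1]; linarith [hv.1]]
  have key : MonotoneOn (fun v : ℝ => A * Real.log (v + c) - B * Real.log (v + d)) (Icc p q) := by
    apply monotoneOn_of_deriv_nonneg (convex_Icc p q)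
    · intro v hv
      exact (hasDerivAt_F A B c d v (hpos v hv).1 (hpos v hv).2).continuousAt.continuousWithinAt
    · intro v hv
      rw [interior_Icc] at hv
      exact (hasDerivAt_F A B c d v (hpos v (Ioo_subset_Icc_self hv)).1
        (hpos v (Ioo_subset_Icc_self hv)).2).differentiableAt.differentiableWithinAt
    · intro v hv
      rw [interior_Icc] at hv
      have h1 := (hpos v (Ioo_subset_Icc_self hv)).1
      have h2 := (hpos v (Ioo_subset_Icc_self hv)).2
      rw [(hasDerivAt_F A B c d v h1 h2).deriv]
      have hN := affine_between A B c d p q v hv.1.le hv.2.le hNp hNq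
      rw [sub_nonneg, div_le_div_iff₀ h2 h1]
      nlinarith [hN]
  exact key (left_mem_Icc.2 hpq) (right_mem_Icc.2 hpq) hpq

/-- strict decrease when the sign numerator is negative on the interval -/
lemma Fab_anti (A B c d : ℝ) (hc : 0 < c) (hd : 0 < d) (p q : ℝ)
    (hp : 0 ≤ p) (hpq : p < q)
    (hNp : A * (p + d) - B * (p + c) < 0) (hNq : A * (q + d) - B * (q + c) < 0) :
    A * Real.log (q + c) - B * Real.log (q + d) < A * Real.log (p + c) - B * Real.log (p + d) := by
  have hpos : ∀ v : ℝ, v ∈ Icc p q → 0 < v + c ∧ 0 < v + d := by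
    intro v hv; constructor <;> [linarith [hv.1]; linarith [hv.1]]
  have key : StrictAntiOn (fun v : ℝ => A * Real.log (v + c) - B * Real.log (v + d)) (Icc p q) := by
    apply strictAntiOn_of_deriv_neg (convex_Icc p q)
    · intro v hv
      exact (hasDerivAt_F A B c d v (hpos v hv).1 (hpos v hv).2).continuousAt.continuousWithinAt
    · intro v hv
      rw [interior_Icc] at hv
      have h1 := (hpos v (Ioo_subset_Icc_self hv)).1
      have h2 := (hpos v (Ioo_subset_Icc_self hv)).2
      rw [(hasDerivAt_F A B c d v h1 h2).deriv]
      have hN := affine_between_neg A B c d p q v hv.1 hv.2 hNp hNq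
      rw [sub_neg, div_lt_div_iff₀ h1 h2]
      nlinarith [hN]
  exact key (left_mem_Icc.2 hpq.le) (right_mem_Icc.2 hpq.le) hpq

/-- shifted-difference comparison (the "E-term" inequality). -/
lemma Fab_shift (A B c d Δ p q : ℝ) (hB : 0 ≤ B) (hc : 0 < c) (hcd : c ≤ d) (hΔ : 0 < Δ)
    (hqΔ : Δ ≤ q) (hqp : q ≤ p)
    (hN1 : 0 ≤ A * ((q - Δ) + d) - B * ((q - Δ) + c))
    (hN2 : 0 ≤ A * ((p - Δ) + d) - B * ((p - Δ) + c)) :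
    (A * Real.log (p + c) - B * Real.log (p + d))
      - (A * Real.log ((p - Δ) + c) - B * Real.log ((p - Δ) + d))
    ≤ (A * Real.log (q + c) - B * Real.log (q + d))
      - (A * Real.log ((q - Δ) + c) - B * Real.log ((q - Δ) + d)) := by
  have hd : 0 < d := lt_of_lt_of_le hc hcd
  have hpos : ∀ v : ℝ, v ∈ Icc q p → 0 < v + c ∧ 0 < v + d ∧ 0 < (v - Δ) + c ∧ 0 < (v - Δ) + d := by
    intro v hv
    refine ⟨by linarith [hv.1], by linarith [hv.1], by linarith [hv.1], by linarith [hv.1]⟩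
  have hder : ∀ v : ℝ, v ∈ Icc q p →
      HasDerivAt (fun v : ℝ => (A * Real.log (v + c) - B * Real.log (v + d))
        - (A * Real.log ((v - Δ) + c) - B * Real.log ((v - Δ) + d)))
        ((A / (v + c) - B / (v + d)) - (A / ((v - Δ) + c) - B / ((v - Δ) + d))) v := by
    intro v hv
    obtain ⟨e1, e2, e3, e4⟩ := hpos v hv
    have h1 := hasDerivAt_F A B c d v e1 e2
    have hsub : HasDerivAt (fun v : ℝ => v - Δ) 1 v := (hasDerivAt_id v).sub_const Δ
    have h2 := (hasDerivAt_F A B c d (v - Δ) e3 e4).comp v hsub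
    have h := h1.sub h2
    rw [mul_one] at h
    exact h
  have key : AntitoneOn (fun v : ℝ => (A * Real.log (v + c) - B * Real.log (v + d))
      - (A * Real.log ((v - Δ) + c) - B * Real.log ((v - Δ) + d))) (Icc q p) := by
    apply antitoneOn_of_deriv_nonpos (convex_Icc q p)
    · intro v hv; exact (hder v hv).continuousAt.continuousWithinAt
    · intro v hv
      rw [interior_Icc] at hv
      exact (hder v (Ioo_subset_Icc_self hv)).differentiableAt.differentiableWithinAt
    · intro v hv
      rw [interior_Icc] at hv
      rw [(hder v (Ioo_subset_Icc_self hv)).deriv]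
      have hNv : 0 ≤ A * ((v - Δ) + d) - B * ((v - Δ) + c) := by
        apply affine_between A B c d (q - Δ) (p - Δ) (v - Δ) (by linarith [hv.1])
          (by linarith [hv.2]) hN1 hN2
      have := g_compare A B c d (v - Δ) v hB hc hcd (by linarith [hv.1.le, hqΔ])
        (by linarith) hNv
      linarith
  exact key (left_mem_Icc.2 hqp) (right_mem_Icc.2 hqp) hqp

/-- natural-log version of the objective -/
lemma objSC_eq_Sval (K : ℕ) (W : ℝ) (w η : ℕ → ℝ) (y : ℕ → ℝ) :
    objSC K W w η y = (W / Real.log 2) * Sval K w η y := by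
  have h2 : Real.log 2 ≠ 0 := ne_of_gt (Real.log_pos one_lt_two)
  unfold objSC Sval fqq
  rw [Finset.mul_sum]
  apply Finset.sum_congr rfl
  intro l _
  unfold Real.logb
  field_simp

/-- Abel-type rearrangement identity -/
lemma abel_id (G : ℕ → ℝ → ℝ) (β α : ℕ → ℝ) (K : ℕ) :
    ∑ l ∈ Finset.Icc 1 K, ((G l (β l) - G (l - 1) (β l)) - (G l (α l) - G (l - 1) (α l)))
    = (∑ j ∈ Finset.Icc 1 K,
        (((G j (β j) - G 0 (β j)) - (G j (α j) - G 0 (α j)))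
         - ((G j (β (j + 1)) - G 0 (β (j + 1))) - (G j (α (j + 1)) - G 0 (α (j + 1))))))
      + ((G K (β (K + 1)) - G 0 (β (K + 1))) - (G K (α (K + 1)) - G 0 (α (K + 1)))) := by
  induction K with
  | zero => simp
  | succ n ih =>
    rw [Finset.sum_Icc_succ_top (Nat.le_add_left 1 n), Finset.sum_Icc_succ_top (Nat.le_add_left 1 n), ih]
    simp only [Nat.add_sub_cancel]
    ring

lemma sum_Icc_shift (n : ℕ) (g : ℕ → ℝ) :
    ∑ l ∈ Finset.Icc 2 (n + 1), g l = ∑ j ∈ Finset.Icc 1 n, g (j + 1) := by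
  have h := Finset.map_add_right_Icc 1 n 1
  rw [← h, Finset.sum_map]
  simp [addRightEmbedding]

lemma sum_Icc_split (K : ℕ) (hK : 1 ≤ K) (g : ℕ → ℝ) :
    ∑ l ∈ Finset.Icc 1 K, g l = g 1 + ∑ l ∈ Finset.Icc 2 K, g l := by
  have h : Finset.Icc 1 K = insert 1 (Finset.Icc 2 K) := by
    ext z; simp only [Finset.mem_Icc, Finset.mem_insert]; omega
  rw [h, Finset.sum_insert (by simp [Finset.mem_Icc])]

lemma chain_anti {K : ℕ} {P : ℝ} {x : ℕ → ℝ} (hx : x ∈ chainSet K P) :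
    ∀ i j, 1 ≤ i → i ≤ j → j ≤ K → x j ≤ x i := by
  obtain ⟨-, hc, -⟩ := hx
  intro i j h1 hij hjK
  induction j, hij using Nat.le_induction with
  | base => exact le_rfl
  | succ n hn ih =>
    exact le_trans (hc n (le_trans h1 hn) (by omega)) (ih (by omega))

lemma chain_nonneg {K : ℕ} {P : ℝ} {x : ℕ → ℝ} (hx : x ∈ chainSet K P) :
    ∀ l, 1 ≤ l → l ≤ K → 0 ≤ x l := by
  intro l h1 hK
  exact le_trans hx.2.2 (chain_anti hx l K h1 hK le_rfl)

lemma eta_le_eta0 {K : ℕ} {η : ℕ → ℝ} (hη : ∀ l, l < K → η (l + 1) ≤ η l) :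
    ∀ j, j ≤ K → η j ≤ η 0 := by
  intro j
  induction j with
  | zero => intro _; exact le_rfl
  | succ n ih => intro h; exact le_trans (hη n (by omega)) (ih (by omega))

/-- The sign condition: at an optimal chain, below each active level `m`,
`w m * (s + η 0) - w 0 * (s + η m) ≥ 0`. -/
lemma claimcor (K : ℕ) (hK : 1 ≤ K) (w η : ℕ → ℝ) (hw0 : 0 ≤ w 0)
    (hw : ∀ l, 1 ≤ l → l ≤ K → 0 < w l) (hη_pos : ∀ l, l ≤ K → 0 < η l)
    (hη_mono : ∀ l, l < K → η (l + 1) ≤ η l) (B : ℝ) (x : ℕ → ℝ) (hx : x ∈ chainSet K B)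
    (hopt : ∀ y ∈ chainSet K B, Sval K w η y ≤ Sval K w η x) :
    ∀ m, 1 ≤ m → m ≤ K → (if m < K then x (m + 1) else 0) < x m →
      ∀ s, 0 ≤ s → s ≤ x m → 0 ≤ w m * (s + η 0) - w 0 * (s + η m) := by
  intro m
  induction m using Nat.strong_induction_on with
  | _ m IH =>
  intro h1m hmK hact s hs hsx
  by_contra hneg
  push_neg at hneg
  have hη0 : 0 < η 0 := hη_pos 0 (Nat.zero_le K)
  have hηm : 0 < η m := hη_pos m hmK
  have hηm0 : η m ≤ η 0 := eta_le_eta0 hη_mono m hmK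
  have hwm : 0 < w m := hw m h1m hmK
  have hxm0 : 0 ≤ x m := chain_nonneg hx m h1m hmK
  have hww : w m < w 0 := by nlinarith
  set L : ℝ := if m < K then x (m + 1) else 0 with hL
  have hL0 : 0 ≤ L := by
    rw [hL]; split
    · exact chain_nonneg hx (m + 1) (by omega) (by omega)
    · exact le_rfl
  have hNxm : w m * (x m + η 0) - w 0 * (x m + η m) < 0 := by nlinarith
  set δ : ℝ := (w 0 * (x m + η m) - w m * (x m + η 0)) / (2 * (w 0 - w m)) with hδ
  have hδpos : 0 < δ := div_pos (by linarith) (by linarith)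
  set t : ℝ := max L (x m - δ) with ht
  have htxm : t < x m := max_lt hact (by linarith)
  have ht0 : 0 ≤ t := le_trans hL0 (le_max_left _ _)
  have hNt : w m * (t + η 0) - w 0 * (t + η m) < 0 := by
    have h1 : x m - δ ≤ t := le_max_right _ _
    have h2 : δ * (2 * (w 0 - w m)) = w 0 * (x m + η m) - w m * (x m + η 0) :=
      div_mul_cancel₀ _ (by linarith)
    nlinarith [mul_nonneg (show (0:ℝ) ≤ w 0 - w m by linarith)
      (show (0:ℝ) ≤ t - (x m - δ) by linarith)]
  set Δ : ℝ := x m - t with hΔdef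
  have hΔpos : 0 < Δ := by rw [hΔdef]; linarith
  set xh : ℕ → ℝ := fun l => if l ≤ m then x l - Δ else x l with hxh
  have hxh_le : ∀ l, l ≤ m → xh l = x l - Δ := fun l h => if_pos h
  have hxh_gt : ∀ l, m < l → xh l = x l := fun l h => if_neg (by omega)
  have hxmt : x m - Δ = t := by rw [hΔdef]; ring
  have hmem : xh ∈ chainSet K B := by
    refine ⟨?_, ?_, ?_⟩
    · rw [hxh_le 1 h1m]; linarith [hx.1]
    · intro l hl1 hlK
      rcases le_or_gt (l + 1) m with h | h
      · rw [hxh_le (l + 1) h, hxh_le l (by omega)]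
        linarith [hx.2.1 l hl1 hlK]
      · rcases le_or_gt l m with h' | h'
        · have hlm : l = m := by omega
          subst hlm
          rw [hxh_gt (l + 1) (by omega), hxh_le l le_rfl, hxmt]
          have hLx : L = x (l + 1) := if_pos hlK
          rw [← hLx]; exact le_max_left _ _
        · rw [hxh_gt (l + 1) (by omega), hxh_gt l h']
          exact hx.2.1 l hl1 hlK
    · rcases le_or_gt K m with h | h
      · have hmKeq : m = K := le_antisymm hmK h
        subst hmKeq
        rw [hxh_le m le_rfl, hxmt]; exact ht0
      · rw [hxh_gt K h]; exact hx.2.2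
  have hle : Sval K w η xh ≤ Sval K w η x := hopt xh hmem
  set G : ℕ → ℝ → ℝ := fun j u => w j * Real.log (u + η j) with hG
  have hid := abel_id G xh x K
  have hLHS : ∑ l ∈ Finset.Icc 1 K, ((G l (xh l) - G (l - 1) (xh l)) - (G l (x l) - G (l - 1) (x l)))
      = Sval K w η xh - Sval K w η x := by
    rw [Finset.sum_sub_distrib]; rfl
  have htail : xh (K + 1) = x (K + 1) := hxh_gt (K + 1) (by omega)
  -- the strictly positive term at j = m
  have hTm : 0 < ((G m (xh m) - G 0 (xh m)) - (G m (x m) - G 0 (x m)))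
      - ((G m (xh (m + 1)) - G 0 (xh (m + 1))) - (G m (x (m + 1)) - G 0 (x (m + 1)))) := by
    rw [hxh_le m le_rfl, hxh_gt (m + 1) (by omega), hxmt]
    simp only [hG]
    have := Fab_anti (w m) (w 0) (η m) (η 0) hηm hη0 t (x m) ht0 htxm
      (by linarith) (by linarith)
    linarith
  have hTpos : 0 < ∑ j ∈ Finset.Icc 1 K,
      (((G j (xh j) - G 0 (xh j)) - (G j (x j) - G 0 (x j)))
       - ((G j (xh (j + 1)) - G 0 (xh (j + 1))) - (G j (x (j + 1)) - G 0 (x (j + 1))))) := by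
    apply Finset.sum_pos'
    · intro j hj
      rw [Finset.mem_Icc] at hj
      rcases lt_trichotomy j m with hjm | hjm | hjm
      · have e1 : xh j = x j - Δ := hxh_le j hjm.le
        have e2 : xh (j + 1) = x (j + 1) - Δ := hxh_le (j + 1) (by omega)
        rcases eq_or_lt_of_le (show x (j + 1) ≤ x j from hx.2.1 j hj.1 (by omega)) with he | he
        · rw [e1, e2, he]; simp
        · have hxmj1 : x m ≤ x (j + 1) := chain_anti hx (j + 1) m (by omega) (by omega) hmK
          have hxmj : x m ≤ x j := chain_anti hx j m hj.1 (by omega) hmK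
          have hIH := IH j hjm hj.1 (by omega)
            (by rw [if_pos (show j < K by omega)]; exact he)
          have hN1 : 0 ≤ w j * ((x (j + 1) - Δ) + η 0) - w 0 * ((x (j + 1) - Δ) + η j) :=
            hIH _ (by linarith) (by linarith)
          have hN2 : 0 ≤ w j * ((x j - Δ) + η 0) - w 0 * ((x j - Δ) + η j) :=
            hIH _ (by linarith) (by linarith)
          have := Fab_shift (w j) (w 0) (η j) (η 0) Δ (x j) (x (j + 1)) hw0
            (hη_pos j (by omega)) (eta_le_eta0 hη_mono j (by omega)) hΔpos
            (by linarith) he.le hN1 hN2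
          rw [e1, e2]
          simp only [hG]
          linarith
      · subst hjm
        exact hTm.le
      · rw [hxh_gt j hjm, hxh_gt (j + 1) (by omega)]
        simp
    · exact ⟨m, Finset.mem_Icc.2 ⟨h1m, hmK⟩, hTm⟩
  rw [hLHS, htail] at hid
  have : Sval K w η xh - Sval K w η x > 0 := by rw [hid]; linarith
  linarith

/-- Key lemma: the capped objective is nondecreasing in the cap. -/
lemma keylemma (K : ℕ) (hK : 1 ≤ K) (w η : ℕ → ℝ) (hw0 : 0 ≤ w 0)
    (hw : ∀ l, 1 ≤ l → l ≤ K → 0 < w l) (hη_pos : ∀ l, l ≤ K → 0 < η l)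
    (hη_mono : ∀ l, l < K → η (l + 1) ≤ η l) (B : ℝ) (x : ℕ → ℝ) (hx : x ∈ chainSet K B)
    (hopt : ∀ y ∈ chainSet K B, Sval K w η y ≤ Sval K w η x)
    (a b : ℝ) (ha : 0 ≤ a) (hab : a ≤ b) :
    Sval K w η (fun l => min (x l) a) ≤ Sval K w η (fun l => min (x l) b) := by
  have hcc := claimcor K hK w η hw0 hw hη_pos hη_mono B x hx hopt
  set G : ℕ → ℝ → ℝ := fun j u => w j * Real.log (u + η j) with hG
  set β : ℕ → ℝ := fun l => if l ≤ K then min (x l) b else 0 with hβ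
  set α : ℕ → ℝ := fun l => if l ≤ K then min (x l) a else 0 with hα
  have hid := abel_id G β α K
  have hβk : ∀ l, l ≤ K → β l = min (x l) b := fun l h => if_pos h
  have hαk : ∀ l, l ≤ K → α l = min (x l) a := fun l h => if_pos h
  have hβK1 : β (K + 1) = 0 := if_neg (by omega)
  have hαK1 : α (K + 1) = 0 := if_neg (by omega)
  have hLHS : ∑ l ∈ Finset.Icc 1 K, ((G l (β l) - G (l - 1) (β l)) - (G l (α l) - G (l - 1) (α l)))
      = Sval K w η (fun l => min (x l) b) - Sval K w η (fun l => min (x l) a) := by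
    rw [Finset.sum_sub_distrib]
    congr 1
    · apply Finset.sum_congr rfl; intro l hl
      rw [Finset.mem_Icc] at hl
      rw [hβk l hl.2]
    · apply Finset.sum_congr rfl; intro l hl
      rw [Finset.mem_Icc] at hl
      rw [hαk l hl.2]
  -- each T_j is nonnegative
  have hT : ∀ j ∈ Finset.Icc 1 K,
      0 ≤ (((G j (β j) - G 0 (β j)) - (G j (α j) - G 0 (α j)))
        - ((G j (β (j + 1)) - G 0 (β (j + 1))) - (G j (α (j + 1)) - G 0 (α (j + 1))))) := by
    intro j hj
    rw [Finset.mem_Icc] at hj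
    have hηj : 0 < η j := hη_pos j hj.2
    have hηj0 : η j ≤ η 0 := eta_le_eta0 hη_mono j hj.2
    have hxj0 : 0 ≤ x j := chain_nonneg hx j hj.1 hj.2
    -- generic one-level monotonicity helper
    have hmono : ∀ p q : ℝ, 0 ≤ p → p ≤ q → q ≤ x j →
        (if j < K then x (j + 1) else 0) < x j →
        G j p - G 0 p ≤ G j q - G 0 q := by
      intro p q hp hpq hqx hactj
      simp only [hG]
      exact Fab_mono (w j) (w 0) (η j) (η 0) hηj hηj0 p q hp hpq
        (hcc j hj.1 hj.2 hactj p hp (le_trans hpq hqx))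
        (hcc j hj.1 hj.2 hactj q (le_trans hp hpq) hqx)
    rcases eq_or_lt_of_le hj.2 with hjK | hjK
    · -- j = K : β (K+1) = α (K+1) = 0
      subst hjK
      rw [hβK1, hαK1, hβk j le_rfl, hαk j le_rfl]
      have hmm : min (x j) a ≤ min (x j) b := min_le_min le_rfl hab
      rcases eq_or_lt_of_le hmm with he | he
      · rw [he]; simp
      · have hax : a < x j := by
          by_contra hcon
          push_neg at hcon
          rw [min_eq_left hcon, min_eq_left (le_trans hcon (by linarith))] at he
          exact lt_irrefl _ he
        have := hmono (min (x j) a) (min (x j) b) (le_min hxj0 ha) hmm (min_le_left _ _)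
          (by rw [if_neg (by omega)]; linarith)
        linarith
    · -- j < K
      have hj1K : j + 1 ≤ K := hjK
      rw [hβk j hj.2, hαk j hj.2, hβk (j + 1) hj1K, hαk (j + 1) hj1K]
      have hxj1 : x (j + 1) ≤ x j := hx.2.1 j hj.1 hjK
      have hxj10 : 0 ≤ x (j + 1) := chain_nonneg hx (j + 1) (by omega) hj1K
      rcases le_or_gt b (x (j + 1)) with hb | hb
      · -- both levels capped at b resp. a
        rw [min_eq_right hb, min_eq_right (le_trans hb hxj1),
          min_eq_right (le_trans hab hb), min_eq_right (le_trans (le_trans hab hb) hxj1)]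
        simp
      · rcases le_or_gt (x (j + 1)) a with hA | hA
        · -- x (j+1) ≤ a : lower terms both equal x (j+1)
          rw [min_eq_left hA, min_eq_left (le_trans hA hab)]
          have hmm : min (x j) a ≤ min (x j) b := min_le_min le_rfl hab
          rcases eq_or_lt_of_le hmm with he | he
          · rw [he]; simp
          · have hax : a < x j := by
              by_contra hcon
              push_neg at hcon
              rw [min_eq_left hcon, min_eq_left (le_trans hcon (by linarith))] at he
              exact lt_irrefl _ he
            have := hmono (min (x j) a) (min (x j) b) (le_min hxj0 ha) hmm (min_le_left _ _)
              (by rw [if_pos hjK]; linarith)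
            linarith
        · -- a < x (j+1) < b
          have e1 : min (x (j + 1)) a = a := min_eq_right hA.le
          have e2 : min (x j) a = a := min_eq_right (le_trans hA.le hxj1)
          have e3 : min (x (j + 1)) b = x (j + 1) := min_eq_left hb.le
          rw [e1, e2, e3]
          rcases eq_or_lt_of_le hxj1 with he | he
          · have hxb : x j ≤ b := by rw [← he]; exact hb.le
            rw [min_eq_left hxb, ← he]; simp
          · have hq : x (j + 1) ≤ min (x j) b := le_min hxj1 hb.le
            have := hmono (x (j + 1)) (min (x j) b) hxj10 hq (min_le_left _ _)
              (by rw [if_pos hjK]; exact he)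
            linarith
  rw [hLHS, hβK1, hαK1] at hid
  have hsum : 0 ≤ ∑ j ∈ Finset.Icc 1 K,
      (((G j (β j) - G 0 (β j)) - (G j (α j) - G 0 (α j)))
        - ((G j (β (j + 1)) - G 0 (β (j + 1))) - (G j (α (j + 1)) - G 0 (α (j + 1))))) :=
    Finset.sum_nonneg hT
  linarith [hid, hsum]

/-- Main truncation lemma, generalized to `w 0 ≥ 0`. -/
lemma truncation_main (K : ℕ) :
    ∀ W : ℝ, 0 < W → ∀ w η : ℕ → ℝ, 0 ≤ w 0 →
    (∀ l, 1 ≤ l → l ≤ K → 0 < w l) → (∀ l, l ≤ K → 0 < η l) →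
    (∀ l, l < K → η (l + 1) ≤ η l) →
    ∀ B : ℝ, ∀ x : ℕ → ℝ, x ∈ chainSet K B →
    (∀ y ∈ chainSet K B, objSC K W w η y ≤ objSC K W w η x) →
    ∀ P : ℝ, 0 ≤ P → P ≤ B →
    ∀ y ∈ chainSet K P, objSC K W w η y ≤ objSC K W w η (fun l => min (x l) P) := by
  induction K with
  | zero =>
    intro W hW w η hw0 hw hη1 hη2 B x hx hopt P hP hPB y hy
    unfold objSC
    simp
  | succ n IH =>
    intro W hW w η hw0 hw hη1 hη2 B x hx hopt P hP hPB y hy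
    have hK : 1 ≤ n + 1 := by omega
    have hWlog : 0 < W / Real.log 2 := div_pos hW (Real.log_pos one_lt_two)
    have hoptS : ∀ z ∈ chainSet (n + 1) B, Sval (n + 1) w η z ≤ Sval (n + 1) w η x := by
      intro z hz
      have h := hopt z hz
      rw [objSC_eq_Sval, objSC_eq_Sval] at h
      exact le_of_mul_le_mul_left h hWlog
    by_cases hx1 : x 1 ≤ P
    · have heq : objSC (n + 1) W w η (fun l => min (x l) P) = objSC (n + 1) W w η x := by
        unfold objSC
        apply Finset.sum_congr rfl
        intro l hl
        rw [Finset.mem_Icc] at hl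
        have : x l ≤ P := le_trans (chain_anti hx 1 l le_rfl hl.1 hl.2) hx1
        show fqq W w η l l (min (x l) P) = fqq W w η l l (x l)
        rw [min_eq_left this]
      rw [heq]
      exact hopt y ⟨le_trans hy.1 hPB, hy.2.1, hy.2.2⟩
    · push_neg at hx1
      have hy1P : y 1 ≤ P := hy.1
      have hy10 : 0 ≤ y 1 := chain_nonneg hy 1 le_rfl hK
      have hx10 : 0 ≤ x 1 := chain_nonneg hx 1 le_rfl hK
      set w' : ℕ → ℝ := fun j => w (j + 1) with hw'
      set η' : ℕ → ℝ := fun j => η (j + 1) with hη'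
      set sx : ℕ → ℝ := fun j => if 1 ≤ j ∧ j ≤ n then x (j + 1) else 0 with hsx
      set y' : ℕ → ℝ := fun j => if 1 ≤ j ∧ j ≤ n then y (j + 1) else 0 with hy'
      have hsplit : ∀ v : ℕ → ℝ, objSC (n + 1) W w η v
          = fqq W w η 1 1 (v 1) + ∑ l ∈ Finset.Icc 2 (n + 1), fqq W w η l l (v l) := by
        intro v
        unfold objSC
        exact sum_Icc_split (n + 1) hK _
      have hreidx : ∀ v z : ℕ → ℝ, (∀ j, 1 ≤ j → j ≤ n → z j = v (j + 1)) →
          ∑ l ∈ Finset.Icc 2 (n + 1), fqq W w η l l (v l) = objSC n W w' η' z := by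
        intro v z hz
        rw [sum_Icc_shift n (fun l => fqq W w η l l (v l))]
        unfold objSC
        apply Finset.sum_congr rfl
        intro j hj
        rw [Finset.mem_Icc] at hj
        rw [hz j hj.1 hj.2]
        unfold fqq
        have e1 : (j + 1 : ℕ) - 1 = j := by omega
        have e4 : w' (j - 1) = w j := by simp only [hw']; congr 1; omega
        have e5 : η' (j - 1) = η j := by simp only [hη']; congr 1; omega
        rw [e1, e4, e5]
      have hsx_mem : sx ∈ chainSet n (x 1) := by
        refine ⟨?_, ?_, ?_⟩
        · by_cases hn : 1 ≤ n
          · have : sx 1 = x 2 := by simp only [hsx]; rw [if_pos ⟨le_rfl, hn⟩]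
            rw [this]
            exact hx.2.1 1 le_rfl (by omega)
          · have : sx 1 = 0 := by simp only [hsx]; rw [if_neg (by omega)]
            rw [this]; exact hx10
        · intro l hl1 hln
          have e1 : sx (l + 1) = x (l + 2) := by simp only [hsx]; rw [if_pos ⟨by omega, by omega⟩]
          have e2 : sx l = x (l + 1) := by simp only [hsx]; rw [if_pos ⟨hl1, by omega⟩]
          rw [e1, e2]
          exact hx.2.1 (l + 1) (by omega) (by omega)
        · by_cases hn : 1 ≤ n
          · have : sx n = x (n + 1) := by simp only [hsx]; rw [if_pos ⟨hn, le_rfl⟩]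
            rw [this]
            exact chain_nonneg hx (n + 1) (by omega) le_rfl
          · have hn0 : n = 0 := by omega
            subst hn0
            have : sx 0 = 0 := by simp only [hsx]; rw [if_neg (by omega)]
            rw [this]
      have hsx_opt : ∀ z ∈ chainSet n (x 1), objSC n W w' η' z ≤ objSC n W w' η' sx := by
        intro z hz
        set zf : ℕ → ℝ := fun l => if l ≤ 1 then x 1 else z (l - 1) with hzf
        have hzf_mem : zf ∈ chainSet (n + 1) B := by
          refine ⟨?_, ?_, ?_⟩
          · have : zf 1 = x 1 := by simp only [hzf]; rw [if_pos le_rfl]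
            rw [this]; exact hx.1
          · intro l hl1 hlK
            by_cases hl : l = 1
            · subst hl
              have e1 : zf 2 = z 1 := by simp only [hzf]; rw [if_neg (by omega)]
              have e2 : zf 1 = x 1 := by simp only [hzf]; rw [if_pos le_rfl]
              rw [e1, e2]
              exact hz.1
            · have h2l : 2 ≤ l := by omega
              have e1 : zf (l + 1) = z l := by
                simp only [hzf]; rw [if_neg (by omega)]; simp
              have e2 : zf l = z (l - 1) := by simp only [hzf]; rw [if_neg (by omega)]
              rw [e1, e2]
              have h := hz.2.1 (l - 1) (by omega) (by omega)
              rw [show l - 1 + 1 = l by omega] at h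
              exact h
          · by_cases hn : n = 0
            · subst hn
              have : zf 1 = x 1 := by simp only [hzf]; rw [if_pos le_rfl]
              rw [this]; exact hx10
            · have : zf (n + 1) = z n := by
                simp only [hzf]; rw [if_neg (by omega)]
                congr 1
              rw [this]
              exact hz.2.2
        have h := hopt zf hzf_mem
        rw [hsplit zf, hsplit x] at h
        have e1 : zf 1 = x 1 := by simp only [hzf]; rw [if_pos le_rfl]
        rw [e1] at h
        have e2 : ∑ l ∈ Finset.Icc 2 (n + 1), fqq W w η l l (zf l) = objSC n W w' η' z := by
          apply hreidx
          intro j hj1 hjn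
          simp only [hzf]
          rw [if_neg (by omega)]
          simp
        have e3 : ∑ l ∈ Finset.Icc 2 (n + 1), fqq W w η l l (x l) = objSC n W w' η' sx := by
          apply hreidx
          intro j hj1 hjn
          simp only [hsx]
          rw [if_pos ⟨hj1, hjn⟩]
        rw [e2, e3] at h
        linarith
      have hIH := IH W hW w' η' (le_of_lt (hw 1 le_rfl hK))
        (fun l h1 hn => hw (l + 1) (by omega) (by omega))
        (fun l hn => hη1 (l + 1) (by omega))
        (fun l hn => hη2 (l + 1) (by omega))
        (x 1) sx hsx_mem hsx_opt (y 1) hy10 (le_of_lt (lt_of_le_of_lt hy1P hx1))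
      have hy'_mem : y' ∈ chainSet n (y 1) := by
        refine ⟨?_, ?_, ?_⟩
        · by_cases hn : 1 ≤ n
          · have : y' 1 = y 2 := by simp only [hy']; rw [if_pos ⟨le_rfl, hn⟩]
            rw [this]
            exact hy.2.1 1 le_rfl (by omega)
          · have : y' 1 = 0 := by simp only [hy']; rw [if_neg (by omega)]
            rw [this]; exact hy10
        · intro l hl1 hln
          have e1 : y' (l + 1) = y (l + 2) := by simp only [hy']; rw [if_pos ⟨by omega, by omega⟩]
          have e2 : y' l = y (l + 1) := by simp only [hy']; rw [if_pos ⟨hl1, by omega⟩]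
          rw [e1, e2]
          exact hy.2.1 (l + 1) (by omega) (by omega)
        · by_cases hn : 1 ≤ n
          · have : y' n = y (n + 1) := by simp only [hy']; rw [if_pos ⟨hn, le_rfl⟩]
            rw [this]
            exact chain_nonneg hy (n + 1) (by omega) le_rfl
          · have hn0 : n = 0 := by omega
            subst hn0
            have : y' 0 = 0 := by simp only [hy']; rw [if_neg (by omega)]
            rw [this]
      have h1 := hIH y' hy'_mem
      have hyfull : objSC (n + 1) W w η y = fqq W w η 1 1 (y 1) + objSC n W w' η' y' := by
        rw [hsplit y]
        congr 1
        apply hreidx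
        intro j hj1 hjn
        simp only [hy']
        rw [if_pos ⟨hj1, hjn⟩]
      have hminfull : objSC (n + 1) W w η (fun l => min (x l) (y 1))
          = fqq W w η 1 1 (y 1) + objSC n W w' η' (fun j => min (sx j) (y 1)) := by
        rw [hsplit]
        congr 1
        · congr 1
          exact min_eq_right (le_of_lt (lt_of_le_of_lt hy1P hx1))
        · apply hreidx
          intro j hj1 hjn
          simp only [hsx]
          rw [if_pos ⟨hj1, hjn⟩]
      have hkeyS := keylemma (n + 1) hK w η hw0 hw hη1 hη2 B x hx hoptS (y 1) P hy10 hy1P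
      have hkey' : objSC (n + 1) W w η (fun l => min (x l) (y 1))
          ≤ objSC (n + 1) W w η (fun l => min (x l) P) := by
        rw [objSC_eq_Sval, objSC_eq_Sval]
        exact mul_le_mul_of_nonneg_left hkeyS hWlog.le
      calc objSC (n + 1) W w η y
          = fqq W w η 1 1 (y 1) + objSC n W w' η' y' := hyfull
        _ ≤ fqq W w η 1 1 (y 1) + objSC n W w' η' (fun j => min (sx j) (y 1)) := by linarith
        _ = objSC (n + 1) W w η (fun l => min (x l) (y 1)) := hminfull.symm
        _ ≤ objSC (n + 1) W w η (fun l => min (x l) P) := hkey'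

/-- **Truncation property of single-carrier power control (i-SCPC).**
If `x*` maximizes `∑_l f_l(x_l)` over the chain set with budget `P_max`, then for any
budget `0 ≤ P ≤ P_max` the truncated vector `l ↦ min (x* l) P` maximizes the same
objective over the chain set with budget `P`. -/
theorem stmt_8
    (K : ℕ) (hK : 1 ≤ K) (W : ℝ) (hW : 0 < W)
    (w η : ℕ → ℝ) (hw0 : w 0 = 0)
    (hw : ∀ l, 1 ≤ l → l ≤ K → 0 < w l)
    (hη_pos : ∀ l, l ≤ K → 0 < η l)
    (hη_mono : ∀ l, l < K → η (l + 1) ≤ η l)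
    (Pmax : ℝ) (hPmax : 0 < Pmax)
    (xstar : ℕ → ℝ) (hxs : xstar ∈ chainSet K Pmax)
    (hmax : ∀ y ∈ chainSet K Pmax, objSC K W w η y ≤ objSC K W w η xstar)
    (P : ℝ) (h0P : 0 ≤ P) (hPP : P ≤ Pmax) :
    (fun l => min (xstar l) P) ∈ chainSet K P ∧
      ∀ y ∈ chainSet K P, objSC K W w η y ≤ objSC K W w η (fun l => min (xstar l) P) := by
  constructor
  · exact ⟨min_le_right _ _,
      fun l hl1 hlK => min_le_min (hxs.2.1 l hl1 hlK) le_rfl,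
      le_min hxs.2.2 h0P⟩
  · exact truncation_main K W hW w η (le_of_eq hw0.symm) hw hη_pos hη_mono
      Pmax xstar hxs hmax P h0P hPP
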